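/- Let (M,μ) and (N,ν) be σ-finite measure spaces and let K : M × N → ℂ be measurable. Suppose there exist constants L, R, S ≥ 0 such that |K(p,q)| ≤ L for all (p,q), μ({p ∈ M : K(p,q) ≠ 0}) ≤ R for every q ∈ N, and ν({q ∈ N : K(p,q) ≠ 0}) ≤ S for every p ∈ M. Then for every α ∈ L²(ν) the function p ↦ ∫_N K(p,q)·α(q) dν(q) belongs to L²(μ), and ∫_M |∫_N K(p,q)·α(q) dν(q)|² dμ(p) ≤ S·R·L²·∫_N |α(q)|² dν(q). In particular, the integral operator with kernel K is a bounded operator from L²(ν) to L²(μ) with norm at most √(S·R)·L. -/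

import Mathlib

open MeasureTheory

/-- Cauchy–Schwarz for lower integrals of `ℝ≥0∞` functions. -/
lemma lintegral_sq_CS {X : Type*} [MeasurableSpace X] (τ : Measure X)
    (f g : X → ENNReal) (hf : AEMeasurable f τ) (hg : AEMeasurable g τ) :
    (∫⁻ x, f x * g x ∂τ) ^ 2 ≤ (∫⁻ x, f x ^ 2 ∂τ) * (∫⁻ x, g x ^ 2 ∂τ) := by
  have hpq : (2 : ℝ).HolderConjugate 2 := Real.HolderConjugate.two_two
  have h := ENNReal.lintegral_mul_le_Lp_mul_Lq τ hpq hf hg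
  have h2 : (∫⁻ x, f x * g x ∂τ) ^ 2
      ≤ ((∫⁻ a, f a ^ (2 : ℝ) ∂τ) ^ (1 / 2 : ℝ) * (∫⁻ a, g a ^ (2 : ℝ) ∂τ) ^ (1 / 2 : ℝ)) ^ 2 :=
    pow_le_pow_left' h 2
  calc (∫⁻ x, f x * g x ∂τ) ^ 2
      ≤ ((∫⁻ a, f a ^ (2 : ℝ) ∂τ) ^ (1 / 2 : ℝ) * (∫⁻ a, g a ^ (2 : ℝ) ∂τ) ^ (1 / 2 : ℝ)) ^ 2 := h2
    _ = (∫⁻ a, f a ^ 2 ∂τ) * (∫⁻ a, g a ^ 2 ∂τ) := by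
        rw [mul_pow, ← ENNReal.rpow_natCast ((∫⁻ a, f a ^ (2 : ℝ) ∂τ) ^ (1 / 2 : ℝ)) 2,
          ← ENNReal.rpow_natCast ((∫⁻ a, g a ^ (2 : ℝ) ∂τ) ^ (1 / 2 : ℝ)) 2,
          ← ENNReal.rpow_mul, ← ENNReal.rpow_mul]
        norm_num

/-- A function bounded by `C`, vanishing off a set of measure at most `D`, has
lower integral at most `C * D`. -/
lemma lintegral_le_of_support {X : Type*} [MeasurableSpace X] (τ : Measure X)
    (f : X → ENNReal) (s : Set X) (hs : MeasurableSet s) (C D : ENNReal)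
    (hC : ∀ x, f x ≤ C) (h0 : ∀ x, x ∉ s → f x = 0) (hD : τ s ≤ D) :
    ∫⁻ x, f x ∂τ ≤ C * D := by
  calc ∫⁻ x, f x ∂τ = ∫⁻ x, s.indicator f x ∂τ := by
        apply lintegral_congr; intro x
        by_cases h : x ∈ s
        · simp [Set.indicator_of_mem h]
        · simp [Set.indicator_of_notMem h, h0 x h]
    _ ≤ ∫⁻ x, s.indicator (fun _ => C) x ∂τ := by
        apply lintegral_mono; intro x
        exact Set.indicator_le_indicator' (fun _ => hC x)
    _ = C * τ s := lintegral_indicator_const hs C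
    _ ≤ C * D := mul_le_mul_right hD C

lemma eLpNorm_two_complex {X : Type*} [MeasurableSpace X] (τ : Measure X) (f : X → ℂ) :
    eLpNorm f 2 τ = (∫⁻ x, (‖f x‖₊ : ENNReal) ^ 2 ∂τ) ^ (1 / 2 : ℝ) := by
  rw [eLpNorm_eq_lintegral_rpow_enorm_toReal two_ne_zero ENNReal.ofNat_ne_top]
  norm_num [enorm_eq_nnnorm]

/-- Integral operators with a uniformly bounded kernel whose supports are
uniformly bounded in measure in each variable are bounded on `L²`:
`∫ |∫ K(p,q) α(q) dν|² dμ ≤ S·R·L² ∫ |α|² dν`. -/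
theorem integral_operator_L2_bounded
    {M N : Type*} [MeasurableSpace M] [MeasurableSpace N]
    (μ : Measure M) (ν : Measure N) [SigmaFinite μ] [SigmaFinite ν]
    (K : M × N → ℂ) (hK : Measurable K)
    (L R S : NNReal)
    (hL : ∀ p q, ‖K (p, q)‖ ≤ L)
    (hR : ∀ q, μ {p | K (p, q) ≠ 0} ≤ (R : ENNReal))
    (hS : ∀ p, ν {q | K (p, q) ≠ 0} ≤ (S : ENNReal)) :
    ∀ α : N → ℂ, MemLp α 2 ν →
      MemLp (fun p => ∫ q, K (p, q) * α q ∂ν) 2 μ ∧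
      (∫⁻ p, (‖∫ q, K (p, q) * α q ∂ν‖₊ : ENNReal) ^ 2 ∂μ)
        ≤ (S : ENNReal) * (R : ENNReal) * (L : ENNReal) ^ 2
            * ∫⁻ q, (‖α q‖₊ : ENNReal) ^ 2 ∂ν := by
  intro α hα
  -- notation
  set k : M → N → ENNReal := fun p q => (‖K (p, q)‖₊ : ENNReal) with hk_def
  set a : N → ENNReal := fun q => (‖α q‖₊ : ENNReal) with ha_def
  have hαm : AEStronglyMeasurable α ν := hα.1
  have ham : AEMeasurable a ν := hαm.enorm
  have hkm : ∀ p, Measurable (k p) := fun p =>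
    (hK.comp (measurable_prodMk_left)).enorm
  have hkm' : ∀ q, Measurable (fun p => k p q) := fun q =>
    (hK.comp (measurable_prodMk_right)).enorm
  -- pointwise bound on the kernel
  have hkL : ∀ p q, k p q ≤ (L : ENNReal) := by
    intro p q
    rw [ENNReal.coe_le_coe, ← NNReal.coe_le_coe, coe_nnnorm]
    exact hL p q
  -- integral bounds from support measures
  have hk_int_q : ∀ p, ∫⁻ q, k p q ∂ν ≤ (L : ENNReal) * S := by
    intro p
    refine lintegral_le_of_support ν (k p) {q | K (p, q) ≠ 0}
      ?_ _ _ (hkL p) ?_ (hS p)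
    · exact (hK.comp (measurable_prodMk_left)) (measurableSet_singleton 0).compl
    · intro q hq
      simp only [Set.mem_setOf_eq, not_not] at hq
      simp [hk_def, hq]
  have hk_int_p : ∀ q, ∫⁻ p, k p q ∂μ ≤ (L : ENNReal) * R := by
    intro q
    refine lintegral_le_of_support μ (fun p => k p q) {p | K (p, q) ≠ 0}
      ?_ _ _ (fun p => hkL p q) ?_ (hR q)
    · exact (hK.comp (measurable_prodMk_right)) (measurableSet_singleton 0).compl
    · intro p hp
      simp only [Set.mem_setOf_eq, not_not] at hp
      simp [hk_def, hp]
  -- pointwise bound: norm of the integral by the lintegral of norms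
  have hpt : ∀ p, (‖∫ q, K (p, q) * α q ∂ν‖₊ : ENNReal) ≤ ∫⁻ q, k p q * a q ∂ν := by
    intro p
    calc (‖∫ q, K (p, q) * α q ∂ν‖₊ : ENNReal)
        ≤ ∫⁻ q, ‖K (p, q) * α q‖₊ ∂ν := enorm_integral_le_lintegral_enorm _
      _ = ∫⁻ q, k p q * a q ∂ν := by
          apply lintegral_congr; intro q
          simp [hk_def, ha_def, nnnorm_mul, ENNReal.coe_mul]
  -- Cauchy–Schwarz
  have hCS : ∀ p, (∫⁻ q, k p q * a q ∂ν) ^ 2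
      ≤ (∫⁻ q, k p q ∂ν) * (∫⁻ q, k p q * a q ^ 2 ∂ν) := by
    intro p
    have hsqrt : ∀ x : ENNReal, x ^ (1 / 2 : ℝ) * x ^ (1 / 2 : ℝ) = x := by
      intro x
      rw [← sq, ← ENNReal.rpow_natCast (x ^ (1 / 2 : ℝ)) 2, ← ENNReal.rpow_mul]
      norm_num
    have h := lintegral_sq_CS ν (fun q => (k p q) ^ (1 / 2 : ℝ))
      (fun q => (k p q) ^ (1 / 2 : ℝ) * a q)
      ((hkm p).aemeasurable.pow_const _)
      (((hkm p).aemeasurable.pow_const _).mul ham)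
    calc (∫⁻ q, k p q * a q ∂ν) ^ 2
        = (∫⁻ q, ((k p q) ^ (1 / 2 : ℝ)) * ((k p q) ^ (1 / 2 : ℝ) * a q) ∂ν) ^ 2 := by
          congr 1; apply lintegral_congr; intro q
          rw [← mul_assoc, hsqrt]
      _ ≤ (∫⁻ q, ((k p q) ^ (1 / 2 : ℝ)) ^ 2 ∂ν)
            * (∫⁻ q, ((k p q) ^ (1 / 2 : ℝ) * a q) ^ 2 ∂ν) := h
      _ = (∫⁻ q, k p q ∂ν) * (∫⁻ q, k p q * a q ^ 2 ∂ν) := by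
          congr 1 <;> (apply lintegral_congr; intro q)
          · rw [sq, hsqrt]
          · rw [mul_pow, sq ((k p q) ^ (1 / 2 : ℝ)), hsqrt]
  -- the main estimate
  have hLS_ne_top : (L : ENNReal) * S ≠ ⊤ :=
    ENNReal.mul_ne_top ENNReal.coe_ne_top ENNReal.coe_ne_top
  have hprod_meas : AEMeasurable (fun z : M × N => (‖K z‖₊ : ENNReal) * a z.2 ^ 2)
      (μ.prod ν) :=
    hK.enorm.aemeasurable.mul (ham.comp_snd.pow_const 2)
  have key : (∫⁻ p, (‖∫ q, K (p, q) * α q ∂ν‖₊ : ENNReal) ^ 2 ∂μ)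
      ≤ (S : ENNReal) * (R : ENNReal) * (L : ENNReal) ^ 2 * ∫⁻ q, a q ^ 2 ∂ν := by
    calc (∫⁻ p, (‖∫ q, K (p, q) * α q ∂ν‖₊ : ENNReal) ^ 2 ∂μ)
        ≤ ∫⁻ p, (∫⁻ q, k p q * a q ∂ν) ^ 2 ∂μ := by
          apply lintegral_mono; intro p
          exact pow_le_pow_left' (hpt p) 2
      _ ≤ ∫⁻ p, ((L : ENNReal) * S) * (∫⁻ q, k p q * a q ^ 2 ∂ν) ∂μ := by
          apply lintegral_mono; intro p
          exact (hCS p).trans (mul_le_mul' (hk_int_q p) le_rfl)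
      _ = ((L : ENNReal) * S) * ∫⁻ p, (∫⁻ q, k p q * a q ^ 2 ∂ν) ∂μ :=
          lintegral_const_mul' _ _ hLS_ne_top
      _ = ((L : ENNReal) * S) * ∫⁻ q, (∫⁻ p, k p q * a q ^ 2 ∂μ) ∂ν := by
          rw [lintegral_lintegral_swap hprod_meas]
      _ = ((L : ENNReal) * S) * ∫⁻ q, (∫⁻ p, k p q ∂μ) * a q ^ 2 ∂ν := by
          congr 1; apply lintegral_congr; intro q
          rw [lintegral_mul_const'' _ (hkm' q).aemeasurable]
      _ ≤ ((L : ENNReal) * S) * ∫⁻ q, ((L : ENNReal) * R) * a q ^ 2 ∂ν := by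
          refine mul_le_mul' le_rfl (lintegral_mono fun q => ?_)
          exact mul_le_mul' (hk_int_p q) le_rfl
      _ = (S : ENNReal) * (R : ENNReal) * (L : ENNReal) ^ 2 * ∫⁻ q, a q ^ 2 ∂ν := by
          rw [lintegral_const_mul' _ _
            (ENNReal.mul_ne_top ENNReal.coe_ne_top ENNReal.coe_ne_top)]
          ring
  refine ⟨⟨?_, ?_⟩, key⟩
  · -- a.e. strong measurability of the integral operator
    have : AEStronglyMeasurable (fun z : M × N => K z * α z.2) (μ.prod ν) :=
      hK.aestronglyMeasurable.mul hαm.comp_snd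
    exact this.integral_prod_right'
  · -- finiteness of the L² norm
    have hαfin : (∫⁻ q, a q ^ 2 ∂ν) < ⊤ := by
      have h2 := hα.2
      rw [eLpNorm_two_complex] at h2
      have := (ENNReal.rpow_lt_top_iff_of_pos (by norm_num : (0:ℝ) < 1/2)).1 h2
      exact this
    rw [eLpNorm_two_complex]
    apply ENNReal.rpow_lt_top_of_nonneg (by norm_num)
    exact ne_top_of_le_ne_top
      (by
        apply ENNReal.mul_ne_top
        · exact ENNReal.mul_ne_top
            (ENNReal.mul_ne_top ENNReal.coe_ne_top ENNReal.coe_ne_top)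
            (by simp [ENNReal.pow_ne_top ENNReal.coe_ne_top])
        · exact hαfin.ne) key
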